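/- Let v_1,…,v_q ∈ ℝⁿ be such that P := conv{v_1,…,v_q} has nonempty interior, let R : ℝⁿ → ℝ ∪ {+∞} be defined by R(x) = inf{ Σ_{i=1}^q λ_i ln λ_i : λ ∈ Δ^{q-1}, Vλ = x } (V the matrix with columns v_i; infimum over the empty set equal to +∞), and let (Ω, μ) be a finite measure space. If η and q̃ are measurable, essentially bounded ℝⁿ-valued functions on Ω with values in P a.e., each uniformly bounded away from ∂P (i.e. ess inf_x dist(η(x), ∂P) > 0 and ess inf_x dist(q̃(x), ∂P) > 0), and μ({x : η(x) ≠ q̃(x)}) > 0, then for every t ∈ (0,1), ∫_Ω R(t η + (1−t) q̃) dμ < t ∫_Ω R(η) dμ + (1−t) ∫_Ω R(q̃) dμ. That is, the integral functional I_R is strictly convex on the class of designs uniformly bounded away from ∂P. -/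

import Mathlib

open Real MeasureTheory

/-- The polytopal entropy `R(x) = inf { Σ_i λ_i ln λ_i : λ ∈ Δ^{q-1}, Vλ = x }`,
with values in `EReal` and the infimum over the empty set equal to `+∞`
(`sInf ∅ = ⊤` in `EReal`).  Here `v i` is the `i`-th column of `V`, so that
`Vλ = Σ_i λ_i v_i`, and `Real.log 0 = 0` implements the convention `0 ln 0 = 0`.
On the polytope `P = conv {v_1, …, v_q}` the value `R(x)` is a (finite) real
number, extracted below with `EReal.toReal`. -/
noncomputable def Rent {n q : ℕ} (v : Fin q → EuclideanSpace ℝ (Fin n))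
    (x : EuclideanSpace ℝ (Fin n)) : EReal :=
  sInf {t : EReal | ∃ l ∈ stdSimplex ℝ (Fin q), (∑ i, l i • v i) = x ∧
      t = ((∑ i, l i * Real.log (l i) : ℝ) : EReal)}

section Aux

variable {n q : ℕ} (v : Fin q → EuclideanSpace ℝ (Fin n))

/-- entropy -/
noncomputable def entA (l : Fin q → ℝ) : ℝ := ∑ i, l i * Real.log (l i)

lemma entA_continuous : Continuous (entA (q := q)) := by
  apply continuous_finset_sum
  intro i _
  exact Real.continuous_mul_log.comp (continuous_apply i)

lemma mem_hull_iffA {x : EuclideanSpace ℝ (Fin n)} :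
    x ∈ convexHull ℝ (Set.range v) ↔
      ∃ l ∈ stdSimplex ℝ (Fin q), (∑ i, l i • v i) = x := by
  constructor
  · intro hx
    rw [convexHull_range_eq_exists_affineCombination] at hx
    obtain ⟨s, w, hw0, hw1, hx⟩ := hx
    classical
    refine ⟨fun i => if i ∈ s then w i else 0, ⟨?_, ?_⟩, ?_⟩
    · intro i; by_cases h : i ∈ s <;> simp [h, hw0 i]
    · rw [Finset.sum_ite_mem, Finset.univ_inter, hw1]
    · have h1 : ∀ i ∈ Finset.univ, (if i ∈ s then w i else 0) • v i
          = if i ∈ s then w i • v i else 0 := by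
        intro i _; by_cases h : i ∈ s <;> simp [h]
      rw [Finset.sum_congr rfl h1, Finset.sum_ite_mem, Finset.univ_inter,
        ← Finset.affineCombination_eq_linear_combination s v w hw1, hx]
  · rintro ⟨l, hl, rfl⟩
    exact mem_convexHull_of_exists_fintype l v hl.1 hl.2 (fun i => Set.mem_range_self i) rfl

lemma entA_bounds {l : Fin q → ℝ} (hl : l ∈ stdSimplex ℝ (Fin q)) :
    -(q : ℝ) ≤ entA l ∧ entA l ≤ 0 := by
  have hle1 : ∀ i, l i ≤ 1 := by
    intro i
    calc l i ≤ ∑ j, l j := Finset.single_le_sum (fun j _ => hl.1 j) (Finset.mem_univ i)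
    _ = 1 := hl.2
  constructor
  · have h1 : ∀ i ∈ Finset.univ, (-1 : ℝ) ≤ l i * Real.log (l i) := by
      intro i _
      rcases eq_or_lt_of_le (hl.1 i) with h | h
      · simp [← h]
      · have h2 : Real.log (l i)⁻¹ ≤ (l i)⁻¹ - 1 := Real.log_le_sub_one_of_pos (by positivity)
        rw [Real.log_inv] at h2
        have h3 : 1 - (l i)⁻¹ ≤ Real.log (l i) := by linarith
        have h4 := mul_le_mul_of_nonneg_left h3 h.le
        have h5 : l i * (1 - (l i)⁻¹) = l i - 1 := by field_simp
        linarith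
    calc -(q : ℝ) = ∑ _i : Fin q, (-1 : ℝ) := by simp
    _ ≤ entA l := Finset.sum_le_sum h1
  · apply Finset.sum_nonpos
    intro i _
    exact mul_nonpos_of_nonneg_of_nonpos (hl.1 i) (Real.log_nonpos (hl.1 i) (hle1 i))

lemma entA_convex {l m : Fin q → ℝ} (hl : ∀ i, 0 ≤ l i) (hm : ∀ i, 0 ≤ m i)
    {a b : ℝ} (ha : 0 ≤ a) (hb : 0 ≤ b) (hab : a + b = 1) :
    entA (a • l + b • m) ≤ a * entA l + b * entA m := by
  have hrw : a * entA l + b * entA m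
      = ∑ i, (a * (l i * Real.log (l i)) + b * (m i * Real.log (m i))) := by
    simp only [entA, Finset.mul_sum, ← Finset.sum_add_distrib]
  rw [hrw]
  apply Finset.sum_le_sum
  intro i _
  have := Real.strictConvexOn_mul_log.convexOn.2 (Set.mem_Ici.mpr (hl i))
    (Set.mem_Ici.mpr (hm i)) ha hb hab
  simpa using this

lemma entA_strictConvex {l m : Fin q → ℝ} (hl : ∀ i, 0 ≤ l i) (hm : ∀ i, 0 ≤ m i)
    (hne : l ≠ m) {a b : ℝ} (ha : 0 < a) (hb : 0 < b) (hab : a + b = 1) :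
    entA (a • l + b • m) < a * entA l + b * entA m := by
  have hrw : a * entA l + b * entA m
      = ∑ i, (a * (l i * Real.log (l i)) + b * (m i * Real.log (m i))) := by
    simp only [entA, Finset.mul_sum, ← Finset.sum_add_distrib]
  rw [hrw]
  obtain ⟨i0, hi0⟩ := Function.ne_iff.mp hne
  apply Finset.sum_lt_sum
  · intro i _
    have := Real.strictConvexOn_mul_log.convexOn.2 (Set.mem_Ici.mpr (hl i))
      (Set.mem_Ici.mpr (hm i)) ha.le hb.le hab
    simpa using this
  · refine ⟨i0, Finset.mem_univ i0, ?_⟩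
    have := Real.strictConvexOn_mul_log.2 (Set.mem_Ici.mpr (hl i0))
      (Set.mem_Ici.mpr (hm i0)) hi0 ha hb hab
    simpa using this

lemma Rent_specA {x : EuclideanSpace ℝ (Fin n)} (hx : x ∈ convexHull ℝ (Set.range v)) :
    ∃ l ∈ stdSimplex ℝ (Fin q), (∑ i, l i • v i) = x ∧
      Rent v x = ((entA l : ℝ) : EReal) ∧
      ∀ m ∈ stdSimplex ℝ (Fin q), (∑ i, m i • v i) = x → entA l ≤ entA m := by
  have hT : Continuous fun l : Fin q → ℝ => ∑ i, l i • v i := by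
    apply continuous_finset_sum
    intro i _
    exact (continuous_apply i).smul continuous_const
  set K : Set (Fin q → ℝ) :=
    stdSimplex ℝ (Fin q) ∩ {l | (∑ i, l i • v i) = x} with hK
  have hKc : IsCompact K :=
    (isCompact_stdSimplex ℝ (Fin q)).inter_right (isClosed_singleton.preimage hT)
  have hKne : K.Nonempty := by
    obtain ⟨l, hl, hl2⟩ := (mem_hull_iffA v).mp hx
    exact ⟨l, hl, hl2⟩
  obtain ⟨l, hlK, hmin⟩ := hKc.exists_isMinOn hKne (entA_continuous.continuousOn)
  refine ⟨l, hlK.1, hlK.2, ?_, fun m hm hm2 => hmin ⟨hm, hm2⟩⟩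
  apply le_antisymm
  · exact sInf_le ⟨l, hlK.1, hlK.2, rfl⟩
  · apply le_sInf
    rintro b ⟨m, hm, hm2, rfl⟩
    exact_mod_cast hmin (⟨hm, hm2⟩ : m ∈ K)

lemma Rent_boundsA {x : EuclideanSpace ℝ (Fin n)} (hx : x ∈ convexHull ℝ (Set.range v)) :
    -(q : ℝ) ≤ (Rent v x).toReal ∧ (Rent v x).toReal ≤ 0 := by
  obtain ⟨l, hl, -, heq, -⟩ := Rent_specA v hx
  rw [heq, EReal.toReal_coe]
  exact entA_bounds hl

lemma Rent_convexOnA :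
    ConvexOn ℝ (convexHull ℝ (Set.range v)) (fun x => (Rent v x).toReal) := by
  refine ⟨convex_convexHull _ _, ?_⟩
  intro x hx y hy a b ha hb hab
  have hc : a • x + b • y ∈ convexHull ℝ (Set.range v) :=
    (convex_convexHull ℝ _) hx hy ha hb hab
  obtain ⟨lx, hlx, hTx, heqx, -⟩ := Rent_specA v hx
  obtain ⟨ly, hly, hTy, heqy, -⟩ := Rent_specA v hy
  obtain ⟨l0, hl0, hT0, heq0, hmin0⟩ := Rent_specA v hc
  have hS : a • lx + b • ly ∈ stdSimplex ℝ (Fin q) :=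
    (convex_stdSimplex ℝ (Fin q)) hlx hly ha hb hab
  have hT : (∑ i, (a • lx + b • ly) i • v i) = a • x + b • y := by
    simp only [Pi.add_apply, Pi.smul_apply, smul_eq_mul, add_smul, mul_smul,
      Finset.sum_add_distrib, ← Finset.smul_sum, hTx, hTy]
  have h1 : entA l0 ≤ entA (a • lx + b • ly) := hmin0 _ hS hT
  have h2 := entA_convex (fun i => hlx.1 i) (fun i => hly.1 i) ha hb hab
  simp only [heq0, heqx, heqy, EReal.toReal_coe, smul_eq_mul]
  linarith

lemma Rent_strictA {x y : EuclideanSpace ℝ (Fin n)}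
    (hx : x ∈ convexHull ℝ (Set.range v)) (hy : y ∈ convexHull ℝ (Set.range v))
    (hne : x ≠ y) {a b : ℝ} (ha : 0 < a) (hb : 0 < b) (hab : a + b = 1) :
    (Rent v (a • x + b • y)).toReal <
      a * (Rent v x).toReal + b * (Rent v y).toReal := by
  have hc : a • x + b • y ∈ convexHull ℝ (Set.range v) :=
    (convex_convexHull ℝ _) hx hy ha.le hb.le hab
  obtain ⟨lx, hlx, hTx, heqx, -⟩ := Rent_specA v hx
  obtain ⟨ly, hly, hTy, heqy, -⟩ := Rent_specA v hy
  obtain ⟨l0, hl0, hT0, heq0, hmin0⟩ := Rent_specA v hc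
  have hS : a • lx + b • ly ∈ stdSimplex ℝ (Fin q) :=
    (convex_stdSimplex ℝ (Fin q)) hlx hly ha.le hb.le hab
  have hT : (∑ i, (a • lx + b • ly) i • v i) = a • x + b • y := by
    simp only [Pi.add_apply, Pi.smul_apply, smul_eq_mul, add_smul, mul_smul,
      Finset.sum_add_distrib, ← Finset.smul_sum, hTx, hTy]
  have hlne : lx ≠ ly := by
    intro h; apply hne; rw [← hTx, ← hTy, h]
  have h1 : entA l0 ≤ entA (a • lx + b • ly) := hmin0 _ hS hT
  have h2 := entA_strictConvex (fun i => hlx.1 i) (fun i => hly.1 i) hlne ha hb hab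
  simp only [heq0, heqx, heqy, EReal.toReal_coe]
  linarith

lemma mem_interior_of_distA {x : EuclideanSpace ℝ (Fin n)} {P : Set (EuclideanSpace ℝ (Fin n))}
    (hx : x ∈ P) (hd : 0 < Metric.infDist x (frontier P)) : x ∈ interior P := by
  by_contra h
  have hfr : x ∈ frontier P := by
    rw [← closure_diff_interior]
    exact ⟨subset_closure hx, h⟩
  rw [Metric.infDist_zero_of_mem hfr] at hd
  exact lt_irrefl 0 hd

end Aux

section Meas

variable {n q : ℕ} (v : Fin q → EuclideanSpace ℝ (Fin n))
variable {Ω : Type*} [MeasurableSpace Ω] (μ : Measure Ω)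

lemma Rent_aestronglyMeasurableA
    {p : EuclideanSpace ℝ (Fin n)} (hp : p ∈ interior (convexHull ℝ (Set.range v)))
    {g : Ω → EuclideanSpace ℝ (Fin n)} (hg : Measurable g)
    (hgi : ∀ᵐ x ∂μ, g x ∈ interior (convexHull ℝ (Set.range v))) :
    AEStronglyMeasurable (fun x => (Rent v (g x)).toReal) μ := by
  classical
  set U := interior (convexHull ℝ (Set.range v)) with hUdef
  have hU : IsOpen U := isOpen_interior
  have hcont : ContinuousOn (fun x => (Rent v x).toReal) U :=
    (Rent_convexOnA v).continuousOn_interior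
  set g' : Ω → EuclideanSpace ℝ (Fin n) := fun x => if g x ∈ U then g x else p with hg'def
  have hg' : Measurable g' := Measurable.ite (hg hU.measurableSet) hg measurable_const
  have hrange : ∀ x, g' x ∈ U := by
    intro x
    by_cases h : g x ∈ U
    · simpa [g', h]
    · simpa [g', h] using hp
  have hg'' : Measurable (fun x => (⟨g' x, hrange x⟩ : U)) := hg'.subtype_mk
  have hF : Continuous (U.restrict (fun x => (Rent v x).toReal)) :=
    continuousOn_iff_continuous_restrict.mp hcont
  have hmeas : Measurable (fun x => (Rent v (g' x)).toReal) :=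
    hF.measurable.comp hg''
  refine hmeas.aestronglyMeasurable.congr (hgi.mono fun x hx => ?_)
  simp only [g', if_pos hx]

lemma Rent_integrableA [IsFiniteMeasure μ]
    {p : EuclideanSpace ℝ (Fin n)} (hp : p ∈ interior (convexHull ℝ (Set.range v)))
    {g : Ω → EuclideanSpace ℝ (Fin n)} (hg : Measurable g)
    (hgi : ∀ᵐ x ∂μ, g x ∈ interior (convexHull ℝ (Set.range v))) :
    Integrable (fun x => (Rent v (g x)).toReal) μ := by
  refine Integrable.mono' (integrable_const (q : ℝ))
    (Rent_aestronglyMeasurableA v μ hp hg hgi) (hgi.mono fun x hx => ?_)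
  have h := Rent_boundsA v (interior_subset hx)
  rw [Real.norm_eq_abs, abs_le]
  constructor <;> linarith [h.1, h.2]

end Meas

/-- Let `P = conv {v_1, …, v_q} ⊂ ℝⁿ` have nonempty interior and let
`(Ω, μ)` be a finite measure space.  If `η` and `q̃` (here `τ`) are measurable,
essentially bounded, take values in `P` a.e., are each essentially uniformly
bounded away from `∂P`, and differ on a set of positive measure, then for every
`t ∈ (0, 1)`,
`∫ R(t η + (1−t) τ) dμ < t ∫ R(η) dμ + (1−t) ∫ R(τ) dμ`:
the integral functional `I_R` is strictly convex on designs uniformly bounded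
away from `∂P`. -/
theorem integral_functional_strictly_convex {n q : ℕ}
    (v : Fin q → EuclideanSpace ℝ (Fin n))
    (hint : (interior (convexHull ℝ (Set.range v))).Nonempty)
    {Ω : Type*} [MeasurableSpace Ω] (μ : Measure Ω) [IsFiniteMeasure μ]
    (η τ : Ω → EuclideanSpace ℝ (Fin n))
    (hηm : Measurable η) (hτm : Measurable τ)
    (hηb : ∃ C : ℝ, ∀ᵐ x ∂μ, ‖η x‖ ≤ C) (hτb : ∃ C : ℝ, ∀ᵐ x ∂μ, ‖τ x‖ ≤ C)
    (hηP : ∀ᵐ x ∂μ, η x ∈ convexHull ℝ (Set.range v))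
    (hτP : ∀ᵐ x ∂μ, τ x ∈ convexHull ℝ (Set.range v))
    (hηd : ∃ ε > 0, ∀ᵐ x ∂μ,
      ε ≤ Metric.infDist (η x) (frontier (convexHull ℝ (Set.range v))))
    (hτd : ∃ ε > 0, ∀ᵐ x ∂μ,
      ε ≤ Metric.infDist (τ x) (frontier (convexHull ℝ (Set.range v))))
    (hneq : 0 < μ {x | η x ≠ τ x})
    (t : ℝ) (ht : t ∈ Set.Ioo (0 : ℝ) 1) :
    (∫ x, (Rent v (t • η x + (1 - t) • τ x)).toReal ∂μ) <
      t * (∫ x, (Rent v (η x)).toReal ∂μ) +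
        (1 - t) * (∫ x, (Rent v (τ x)).toReal ∂μ) := by

  obtain ⟨p, hp⟩ := hint
  obtain ⟨ε₁, hε₁, hηd'⟩ := hηd
  obtain ⟨ε₂, hε₂, hτd'⟩ := hτd
  obtain ⟨ht0, ht1⟩ := ht
  have ht1' : (0 : ℝ) < 1 - t := by linarith
  -- a.e. interior membership
  have hηi : ∀ᵐ x ∂μ, η x ∈ interior (convexHull ℝ (Set.range v)) :=
    (hηP.and hηd').mono fun x ⟨h1, h2⟩ =>
      mem_interior_of_distA h1 (lt_of_lt_of_le hε₁ h2)
  have hτi : ∀ᵐ x ∂μ, τ x ∈ interior (convexHull ℝ (Set.range v)) :=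
    (hτP.and hτd').mono fun x ⟨h1, h2⟩ =>
      mem_interior_of_distA h1 (lt_of_lt_of_le hε₂ h2)
  have hci : ∀ᵐ x ∂μ, (t • η x + (1 - t) • τ x) ∈
      interior (convexHull ℝ (Set.range v)) :=
    (hηi.and hτi).mono fun x ⟨h1, h2⟩ =>
      (convex_convexHull ℝ (Set.range v)).interior h1 h2 ht0.le ht1'.le (by ring)
  have hcm : Measurable fun x => t • η x + (1 - t) • τ x :=
    (hηm.const_smul t).add (hτm.const_smul (1 - t))
  -- integrability
  have Iη := Rent_integrableA v μ hp hηm hηi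
  have Iτ := Rent_integrableA v μ hp hτm hτi
  have Ic := Rent_integrableA v μ hp hcm hci
  -- difference function
  set f : EuclideanSpace ℝ (Fin n) → ℝ := fun x => (Rent v x).toReal with hf
  set g : Ω → ℝ := fun x =>
    (t * f (η x) + (1 - t) * f (τ x)) - f (t • η x + (1 - t) • τ x) with hgdef
  have Ig : Integrable g μ := ((Iη.const_mul t).add (Iτ.const_mul (1 - t))).sub Ic
  have hg0 : 0 ≤ᵐ[μ] g := by
    filter_upwards [hηP, hτP] with x h1 h2
    have := (Rent_convexOnA v).2 h1 h2 ht0.le ht1'.le (by ring)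
    simp only [smul_eq_mul] at this
    simp only [g, f, Pi.zero_apply]
    linarith
  have hglt : ∀ᵐ x ∂μ, η x ≠ τ x → 0 < g x := by
    filter_upwards [hηP, hτP] with x h1 h2 hne
    have := Rent_strictA v h1 h2 hne ht0 ht1' (by ring)
    simp only [g, f]
    linarith
  have hsub : {x | η x ≠ τ x} ≤ᵐ[μ] Function.support g := by
    filter_upwards [hglt] with x hx hmem
    exact Function.mem_support.mpr (ne_of_gt (hx hmem))
  have hsup : 0 < μ (Function.support g) := lt_of_lt_of_le hneq (measure_mono_ae hsub)
  have hpos : 0 < ∫ x, g x ∂μ :=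
    (integral_pos_iff_support_of_nonneg_ae hg0 Ig).mpr hsup
  have IA : Integrable (fun x => t * f (η x) + (1 - t) * f (τ x)) μ :=
    (Iη.const_mul t).add (Iτ.const_mul (1 - t))
  have hsplit : ∫ x, g x ∂μ =
      (∫ x, (t * f (η x) + (1 - t) * f (τ x)) ∂μ)
        - ∫ x, f (t • η x + (1 - t) • τ x) ∂μ := integral_sub IA Ic
  have h2 : ∫ x, (t * f (η x) + (1 - t) * f (τ x)) ∂μ
      = t * (∫ x, f (η x) ∂μ) + (1 - t) * (∫ x, f (τ x) ∂μ) := by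
    rw [integral_add (Iη.const_mul t) (Iτ.const_mul (1 - t)),
      integral_const_mul, integral_const_mul]
  rw [hsplit, h2] at hpos
  linarith
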